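/- Assume d is odd and a ∈ ℓ²(ℤ_d) is such that â is symmetric (â(j) = â(d−j) for all j) and strictly decreasing on {0, 1, …, (d−1)/2}. Let A be the circular convolution operator with kernel a and let Ω = {i_1, i_2} ⊂ ℤ_d with i_1 ≠ i_2. Then Y = {e_i, A e_i, …, A^{(d−1)/2} e_i : i ∈ Ω} is a frame for ℓ²(ℤ_d) if and only if gcd(|i_1 − i_2|, d) = 1. -/

import Mathlib

open Matrix

/-- Unnormalized discrete Fourier transform of `a : ZMod d → ℂ`. -/
noncomputable def hatKer (d : ℕ) [NeZero d] (a : ZMod d → ℂ) : ZMod d → ℂ :=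
  fun j => ∑ k : ZMod d,
    a k * Complex.exp (-(2 * (Real.pi : ℂ) * Complex.I) * ((j.val : ℂ) * (k.val : ℂ)) / (d : ℂ))

/-- The circular convolution operator with kernel `a`, as a matrix. -/
def convMat (d : ℕ) (a : ZMod d → ℂ) : Matrix (ZMod d) (ZMod d) ℂ :=
  Matrix.of fun k i => a (k - i)

/-- The normalized discrete Fourier matrix `F_d`. -/
noncomputable def FdMat (d : ℕ) : Matrix (ZMod d) (ZMod d) ℂ :=
  Matrix.of fun j k =>
    ((Real.sqrt d : ℝ) : ℂ)⁻¹ *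
      Complex.exp (-(2 * (Real.pi : ℂ) * Complex.I) * ((j.val : ℂ) * (k.val : ℂ)) / (d : ℂ))

noncomputable def zet (d : ℕ) : ℂ := Complex.exp (2 * Real.pi * Complex.I / d)

lemma zet_prim (d : ℕ) [NeZero d] : IsPrimitiveRoot (zet d) d :=
  Complex.isPrimitiveRoot_exp d (NeZero.ne d)

lemma zet_pow_d (d : ℕ) [NeZero d] : zet d ^ d = 1 := (zet_prim d).pow_eq_one

noncomputable def Ech (d : ℕ) [NeZero d] : AddChar (ZMod d) ℂ :=
  AddChar.zmodChar d (zet_pow_d d)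

lemma Ech_prim (d : ℕ) [NeZero d] : (Ech d).IsPrimitive :=
  AddChar.zmodChar_primitive_of_primitive_root d (zet_prim d)

lemma Ech_eq_one_iff (d : ℕ) [NeZero d] (x : ZMod d) : Ech d x = 1 ↔ x = 0 :=
  AddChar.IsPrimitive.zmod_char_eq_one_iff d (Ech_prim d) x

lemma Ech_ne_zero (d : ℕ) [NeZero d] (x : ZMod d) : Ech d x ≠ 0 := by
  have : Ech d x = zet d ^ x.val := rfl
  rw [this]
  exact pow_ne_zero _ (Complex.exp_ne_zero _)

lemma Ech_natCast (d : ℕ) [NeZero d] (n : ℕ) : Ech d (n : ZMod d) = zet d ^ n :=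
  AddChar.zmodChar_apply' (zet_pow_d d) n

lemma Ech_mul_exp (d : ℕ) [NeZero d] (j k : ZMod d) :
    Ech d (j * k) =
      Complex.exp ((2 * (Real.pi : ℂ) * Complex.I) * ((j.val : ℂ) * (k.val : ℂ)) / (d : ℂ)) := by
  have h1 : j * k = ((j.val * k.val : ℕ) : ZMod d) := by
    push_cast [ZMod.natCast_zmod_val]; ring
  rw [h1, Ech_natCast, zet, ← Complex.exp_nat_mul]
  congr 1
  push_cast
  ring

lemma Ech_neg_exp (d : ℕ) [NeZero d] (j k : ZMod d) :
    Ech d (-(j * k)) =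
      Complex.exp (-(2 * (Real.pi : ℂ) * Complex.I) * ((j.val : ℂ) * (k.val : ℂ)) / (d : ℂ)) := by
  have := AddChar.map_neg_eq_inv (Ech d) (j * k)
  rw [this, Ech_mul_exp, ← Complex.exp_neg]
  ring_nf

lemma hatKer_eq (d : ℕ) [NeZero d] (a : ZMod d → ℂ) (j : ZMod d) :
    hatKer d a j = ∑ k : ZMod d, a k * Ech d (-(j * k)) := by
  unfold hatKer
  exact Finset.sum_congr rfl fun k _ => by rw [Ech_neg_exp]

/-- orthogonality -/
lemma Ech_sum (d : ℕ) [NeZero d] (x : ZMod d) :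
    ∑ k : ZMod d, Ech d (x * k) = if x = 0 then (d : ℂ) else 0 := by
  split_ifs with h
  · subst h; simp [AddChar.map_zero_eq_one, ZMod.card]
  · have hne : AddChar.mulShift (Ech d) x ≠ 1 := Ech_prim d h
    have := AddChar.sum_eq_zero_of_ne_one hne
    simpa [AddChar.mulShift_apply] using this

/-- Fourier mode -/
noncomputable def chi (d : ℕ) [NeZero d] (j : ZMod d) : ZMod d → ℂ := fun k => Ech d (j * k)

lemma convMat_mulVec_chi (d : ℕ) [NeZero d] (a : ZMod d → ℂ) (j : ZMod d) :
    convMat d a *ᵥ chi d j = hatKer d a j • chi d j := by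
  funext k
  have hre : ∀ i : ZMod d, a (k - i) * Ech d (j * i)
      = (a (k - i) * Ech d (-(j * (k - i)))) * Ech d (j * k) := by
    intro i
    have : Ech d (j * i) = Ech d (-(j * (k - i))) * Ech d (j * k) := by
      rw [← AddChar.map_add_eq_mul]; congr 1; ring
    rw [this]; ring
  calc (convMat d a *ᵥ chi d j) k = ∑ i : ZMod d, a (k - i) * Ech d (j * i) := rfl
    _ = ∑ i : ZMod d, (a (k - i) * Ech d (-(j * (k - i)))) * Ech d (j * k) :=
        Finset.sum_congr rfl fun i _ => hre i
    _ = (∑ i : ZMod d, a (k - i) * Ech d (-(j * (k - i)))) * Ech d (j * k) :=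
        (Finset.sum_mul _ _ _).symm
    _ = (∑ t : ZMod d, a t * Ech d (-(j * t))) * Ech d (j * k) := by
        congr 1
        exact Fintype.sum_equiv (Equiv.subLeft k) _ _ (fun i => rfl)
    _ = hatKer d a j • chi d j k := by rw [← hatKer_eq]; rfl

lemma convMat_pow_mulVec_chi (d : ℕ) [NeZero d] (a : ZMod d → ℂ) (j : ZMod d) (n : ℕ) :
    (convMat d a) ^ n *ᵥ chi d j = (hatKer d a j) ^ n • chi d j := by
  induction n with
  | zero => simp
  | succ n ih =>
    rw [pow_succ, ← Matrix.mulVec_mulVec, convMat_mulVec_chi, Matrix.mulVec_smul, ih,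
      smul_smul, pow_succ, mul_comm]

lemma single_eq_sum_chi (d : ℕ) [NeZero d] (i : ZMod d) :
    (Pi.single i 1 : ZMod d → ℂ) = (d : ℂ)⁻¹ • ∑ j : ZMod d, Ech d (-(j * i)) • chi d j := by
  funext k
  have hd : (d : ℂ) ≠ 0 := Nat.cast_ne_zero.mpr (NeZero.ne d)
  have : ∑ j : ZMod d, Ech d (-(j * i)) * Ech d (j * k) = ∑ j : ZMod d, Ech d ((k - i) * j) := by
    refine Finset.sum_congr rfl fun j _ => ?_
    rw [← AddChar.map_add_eq_mul]; congr 1; ring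
  have h2 : (∑ j : ZMod d, Ech d (-(j * i)) • chi d j) k
      = if k - i = 0 then (d : ℂ) else 0 := by
    rw [Finset.sum_apply]
    simpa [chi, this] using Ech_sum d (k - i)
  rw [Pi.smul_apply, h2]
  rcases eq_or_ne k i with rfl | h
  · simp [Pi.single_apply, hd]
  · have : k - i ≠ 0 := sub_ne_zero.mpr h
    simp [Pi.single_apply, this, h.symm, Ne.symm h]

lemma pow_mulVec_single (d : ℕ) [NeZero d] (a : ZMod d → ℂ) (i : ZMod d) (n : ℕ) :
    (convMat d a) ^ n *ᵥ (Pi.single i 1 : ZMod d → ℂ)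
      = (d : ℂ)⁻¹ • ∑ j : ZMod d, (Ech d (-(j * i)) * (hatKer d a j) ^ n) • chi d j := by
  rw [single_eq_sum_chi, Matrix.mulVec_smul]
  congr 1
  rw [show ((convMat d a ^ n).mulVec (∑ j : ZMod d, Ech d (-(j * i)) • chi d j))
      = ∑ j : ZMod d, (convMat d a ^ n) *ᵥ (Ech d (-(j * i)) • chi d j) from
    map_sum (Matrix.mulVecLin (convMat d a ^ n)) _ _]
  refine Finset.sum_congr rfl fun j _ => ?_
  rw [Matrix.mulVec_smul, convMat_pow_mulVec_chi, smul_smul]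

/-- dot-product span criterion -/
lemma span_top_iff_dot (d : ℕ) [NeZero d] (S : Set (ZMod d → ℂ)) :
    Submodule.span ℂ S = ⊤ ↔
      ∀ f : ZMod d → ℂ, (∀ v ∈ S, ∑ k : ZMod d, v k * f k = 0) → f = 0 := by
  constructor
  · intro hS f hf
    let φ : (ZMod d → ℂ) →ₗ[ℂ] ℂ :=
      { toFun := fun v => ∑ k : ZMod d, v k * f k
        map_add' := by intro x y; simp [add_mul, Finset.sum_add_distrib]
        map_smul' := by intro c x; simp [Finset.mul_sum, mul_assoc] }
    have hker : Submodule.span ℂ S ≤ LinearMap.ker φ := by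
      rw [Submodule.span_le]; intro v hv; exact hf v hv
    rw [hS, top_le_iff] at hker
    funext k
    have := LinearMap.congr_fun (LinearMap.ker_eq_top.mp hker) (Pi.single k 1)
    simpa [φ, Pi.single_apply] using this
  · intro h
    by_contra hne
    obtain ⟨φ, hφ0, hφ⟩ := Submodule.exists_dual_map_eq_bot_of_lt_top
      (lt_top_iff_ne_top.mpr hne) inferInstance
    have hvan : ∀ v ∈ Submodule.span ℂ S, φ v = 0 := by
      intro v hv
      have : φ v ∈ Submodule.map φ (Submodule.span ℂ S) := ⟨v, hv, rfl⟩
      rwa [hφ, Submodule.mem_bot] at this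
    set f : ZMod d → ℂ := fun k => φ (Pi.single k 1) with hfdef
    have hrep : ∀ v : ZMod d → ℂ, φ v = ∑ k : ZMod d, v k * f k := by
      intro v
      conv_lhs => rw [← Finset.univ_sum_single v]
      rw [map_sum]
      refine Finset.sum_congr rfl fun k _ => ?_
      have : Pi.single k (v k) = v k • (Pi.single k 1 : ZMod d → ℂ) := by
        rw [← Pi.single_smul, smul_eq_mul, mul_one]
      rw [this, _root_.map_smul, smul_eq_mul]
    have hf0 : f = 0 := by
      apply h
      intro v hv
      rw [← hrep]
      exact hvan v (Submodule.subset_span hv)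
    apply hφ0
    refine LinearMap.ext fun v => ?_
    rw [hrep, hf0]
    simp

/-- "DFT" of f with plus sign; injectivity -/
lemma eq_zero_of_dft_eq_zero (d : ℕ) [NeZero d] (f : ZMod d → ℂ)
    (h : ∀ j : ZMod d, ∑ k : ZMod d, f k * Ech d (j * k) = 0) : f = 0 := by
  have hd : (d : ℂ) ≠ 0 := Nat.cast_ne_zero.mpr (NeZero.ne d)
  funext k
  show f k = 0
  have key : ∑ j : ZMod d, (∑ l : ZMod d, f l * Ech d (j * l)) * Ech d (-(j * k))
      = (d : ℂ) * f k := by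
    calc ∑ j : ZMod d, (∑ l : ZMod d, f l * Ech d (j * l)) * Ech d (-(j * k))
        = ∑ j : ZMod d, ∑ l : ZMod d, f l * Ech d (j * l) * Ech d (-(j * k)) := by
          simp_rw [Finset.sum_mul]
      _ = ∑ l : ZMod d, ∑ j : ZMod d, f l * Ech d (j * l) * Ech d (-(j * k)) :=
          Finset.sum_comm
      _ = ∑ l : ZMod d, f l * ∑ j : ZMod d, Ech d ((l - k) * j) := by
          refine Finset.sum_congr rfl fun l _ => ?_
          rw [Finset.mul_sum]
          refine Finset.sum_congr rfl fun j _ => ?_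
          rw [mul_assoc, ← AddChar.map_add_eq_mul]
          congr 2; ring
      _ = ∑ l : ZMod d, f l * (if l - k = 0 then (d : ℂ) else 0) := by
          refine Finset.sum_congr rfl fun l _ => by rw [Ech_sum]
      _ = (d : ℂ) * f k := by
          rw [Finset.sum_eq_single k]
          · simp [mul_comm]
          · intro l _ hl; simp [sub_ne_zero.mpr hl]
          · intro h; exact absurd (Finset.mem_univ k) h
  have h2 : (d : ℂ) * f k = 0 := by
    rw [← key]
    refine Finset.sum_eq_zero fun j _ => ?_
    rw [h j, zero_mul]
  exact (mul_eq_zero.mp h2).resolve_left hd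

lemma zmod_odd_double (d : ℕ) [NeZero d] (hodd : Odd d) (x : ZMod d) (h : x + x = 0) :
    x = 0 := by
  by_contra hx
  have hv : x.val < d := ZMod.val_lt x
  have hneg : x = -x := by rw [eq_neg_iff_add_eq_zero]; exact h
  have h2 : x.val = (-x).val := by rw [← hneg]
  rw [ZMod.neg_val, if_neg hx] at h2
  obtain ⟨t, ht⟩ := hodd
  have hv0 : x.val ≠ 0 := fun h0 => hx ((ZMod.val_eq_zero x).mp h0)
  omega

lemma ghat_zero (d m : ℕ) [NeZero d] (hodd : Odd d) (hd2 : d = 2 * m + 1)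
    (lam : ZMod d → ℂ)
    (hlamsym : ∀ j : ZMod d, lam (-j) = lam j)
    (hinj : ∀ s t : ℕ, s ≤ m → t ≤ m → lam (s : ZMod d) = lam (t : ZMod d) → s = t)
    (i₁ i₂ : ZMod d) (hunit : IsUnit (i₁ - i₂)) (g : ZMod d → ℂ)
    (hg : ∀ n ≤ m, ∀ i : ZMod d, i = i₁ ∨ i = i₂ →
      ∑ j : ZMod d, lam j ^ n * (Ech d (-(j * i)) * g j) = 0) :
    ∀ j : ZMod d, g j = 0 := by
  -- the fiber map
  have hrlt : ∀ j : ZMod d, min j.val (d - j.val) < m + 1 := by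
    intro j; have := ZMod.val_lt j; omega
  set r : ZMod d → Fin (m + 1) := fun j => ⟨min j.val (d - j.val), hrlt j⟩ with hr
  set μ : Fin (m + 1) → ℂ := fun s => lam ((s.val : ℕ) : ZMod d) with hμ
  have hvcast : ∀ s : Fin (m + 1), ((s.val : ℕ) : ZMod d).val = s.val := by
    intro s; exact ZMod.val_cast_of_lt (by omega)
  have hμr : ∀ j : ZMod d, lam j = μ (r j) := by
    intro j
    have hv : j.val < d := ZMod.val_lt j
    rcases le_or_gt j.val (d - j.val) with hle | hlt
    · have : r j = ⟨j.val, by omega⟩ := by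
        apply Fin.ext; simp [hr, min_eq_left hle]
      rw [this, hμ]
      simp [ZMod.natCast_zmod_val]
    · have : r j = ⟨d - j.val, by omega⟩ := by
        apply Fin.ext; simp [hr, min_eq_right (le_of_lt hlt)]
      rw [this, hμ]
      have hcast : (((d - j.val : ℕ)) : ZMod d) = -j := by
        push_cast [Nat.cast_sub (le_of_lt hv)]
        simp [ZMod.natCast_zmod_val]
      simp only [hcast, hlamsym]
  -- fibers
  have hfib : ∀ (s : Fin (m + 1)) (j : ZMod d),
      r j = s ↔ (j = ((s.val : ℕ) : ZMod d) ∨ j = -((s.val : ℕ) : ZMod d)) := by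
    intro s j
    have hv : j.val < d := ZMod.val_lt j
    have hsv : ((s.val : ℕ) : ZMod d).val = s.val := hvcast s
    have hsm : s.val < m + 1 := s.isLt
    constructor
    · intro h
      have hmin : min j.val (d - j.val) = s.val := congrArg Fin.val h
      rcases eq_or_ne j.val s.val with hjs | hjs
      · left
        rw [← ZMod.natCast_zmod_val j, hjs]
      · right
        have h1 : j.val = d - s.val ∧ 0 < s.val := by omega
        have hsne : ((s.val : ℕ) : ZMod d) ≠ 0 := by
          intro h0; rw [h0, ZMod.val_zero] at hsv; omega
        have : (-((s.val : ℕ) : ZMod d)).val = d - s.val := by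
          rw [ZMod.neg_val, if_neg hsne, hsv]
        rw [← ZMod.natCast_zmod_val j, h1.1, ← this, ZMod.natCast_zmod_val]
    · intro h
      rcases h with rfl | rfl
      · apply Fin.ext
        simp only [hr]
        rw [hsv]; omega
      · apply Fin.ext
        simp only [hr]
        rcases eq_or_ne s.val 0 with h0 | h0
        · have : ((s.val : ℕ) : ZMod d) = 0 := by rw [h0]; simp
          rw [this, neg_zero, ZMod.val_zero]; omega
        · have hsne : ((s.val : ℕ) : ZMod d) ≠ 0 := by
            intro hh; rw [hh, ZMod.val_zero] at hsv; omega
          rw [ZMod.neg_val, if_neg hsne, hsv]; omega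
  -- μ injective
  have hμinj : Function.Injective μ := by
    intro s t hst
    exact Fin.ext (hinj s.val t.val (by omega) (by omega) hst)
  -- fiberwise coefficients vanish
  have hc : ∀ i : ZMod d, i = i₁ ∨ i = i₂ → ∀ s : Fin (m + 1),
      (∑ j ∈ Finset.univ.filter (fun j => r j = s), Ech d (-(j * i)) * g j) = 0 := by
    intro i hi
    set c : Fin (m + 1) → ℂ :=
      fun s => ∑ j ∈ Finset.univ.filter (fun j => r j = s), Ech d (-(j * i)) * g j with hcdef
    have key : ∀ n : Fin (m + 1), ∑ s : Fin (m + 1), c s * μ s ^ (n : ℕ) = 0 := by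
      intro n
      have h1 := hg n.val (by omega) i hi
      have h2 : ∑ j : ZMod d, lam j ^ (n : ℕ) * (Ech d (-(j * i)) * g j)
          = ∑ s : Fin (m + 1), c s * μ s ^ (n : ℕ) := by
        rw [hcdef]
        simp only [Finset.sum_mul]
        calc ∑ j : ZMod d, lam j ^ (n : ℕ) * (Ech d (-(j * i)) * g j)
            = ∑ j ∈ Finset.univ.filter (fun j => r j ∈ (Finset.univ : Finset (Fin (m+1)))),
                lam j ^ (n : ℕ) * (Ech d (-(j * i)) * g j) := by simp
          _ = ∑ s : Fin (m + 1), ∑ j ∈ Finset.univ.filter (fun j => r j = s),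
                lam j ^ (n : ℕ) * (Ech d (-(j * i)) * g j) :=
              (Finset.sum_fiberwise_eq_sum_filter Finset.univ Finset.univ r _).symm
          _ = ∑ s : Fin (m + 1), ∑ j ∈ Finset.univ.filter (fun j => r j = s),
                Ech d (-(j * i)) * g j * μ s ^ (n : ℕ) := by
              refine Finset.sum_congr rfl fun s _ => Finset.sum_congr rfl fun j hj => ?_
              have hrj : r j = s := by simpa using hj
              rw [hμr j, hrj]; ring
      rw [← h2, h1]
    have := Matrix.eq_zero_of_forall_pow_sum_mul_pow_eq_zero hμinj
      (v := c) (f := μ) key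
    intro s
    exact congrFun this s
  -- conclude
  have hg0 : g 0 = 0 := by
    have h0 := hc i₁ (Or.inl rfl) 0
    have hfil : Finset.univ.filter (fun j => r j = (0 : Fin (m+1))) = {(0 : ZMod d)} := by
      ext j
      simp only [Finset.mem_filter, Finset.mem_univ, true_and, Finset.mem_singleton, hfib]
      simp
    rw [hfil, Finset.sum_singleton] at h0
    simpa using h0
  intro j
  set s := r j with hs
  rcases eq_or_ne s 0 with h0 | h0
  · have : j = 0 := by
      have := (hfib s j).mp rfl
      rw [h0] at this
      simpa using this
    rw [this]; exact hg0
  · -- the pair fiber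
    set x : ZMod d := ((s.val : ℕ) : ZMod d) with hx
    have hspos : 0 < s.val := by
      rcases Nat.eq_zero_or_pos s.val with hh | hh
      · refine absurd (Fin.ext ?_) h0
        rw [hh, Fin.val_zero]
      · exact hh
    have hxne : x ≠ 0 := by
      intro hh
      have h5 := hvcast s
      rw [← hx, hh, ZMod.val_zero] at h5
      omega
    have hxnenegx : x ≠ -x := by
      intro hh
      exact hxne (zmod_odd_double d hodd x (by rw [eq_neg_iff_add_eq_zero] at hh; exact hh))
    have hfil2 : Finset.univ.filter (fun j' => r j' = s) = {x, -x} := by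
      ext j'
      simp only [Finset.mem_filter, Finset.mem_univ, true_and, Finset.mem_insert,
        Finset.mem_singleton, hfib s j']
      rw [hx]
    have heq : ∀ i : ZMod d, i = i₁ ∨ i = i₂ →
        Ech d (-(x * i)) * g x + Ech d (x * i) * g (-x) = 0 := by
      intro i hi
      have h6 := hc i hi s
      rw [hfil2, Finset.sum_pair hxnenegx] at h6
      have hrw : -(-x * i) = x * i := by ring
      rwa [hrw] at h6
    have hdet : Ech d (-(x * i₁)) * Ech d (x * i₂) - Ech d (-(x * i₂)) * Ech d (x * i₁) ≠ 0 := by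
      intro hh
      have h7 : Ech d (x * i₂ - x * i₁) = Ech d (x * i₁ - x * i₂) := by
        have e1 : Ech d (-(x * i₁)) * Ech d (x * i₂) = Ech d (x * i₂ - x * i₁) := by
          rw [← AddChar.map_add_eq_mul]; congr 1; ring
        have e2 : Ech d (-(x * i₂)) * Ech d (x * i₁) = Ech d (x * i₁ - x * i₂) := by
          rw [← AddChar.map_add_eq_mul]; congr 1; ring
        rw [← e1, ← e2]; exact sub_eq_zero.mp hh
      set y : ZMod d := x * i₁ - x * i₂ with hy
      have h8 : Ech d (y + y) = 1 := by
        rw [AddChar.map_add_eq_mul]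
        have : Ech d y * Ech d (-y) = 1 := by
          rw [← AddChar.map_add_eq_mul]; simp
        calc Ech d y * Ech d y = Ech d y * Ech d (-y) := by
              congr 1
              rw [← h7]; congr 1; ring
          _ = 1 := this
      have h9 : y = 0 := zmod_odd_double d hodd y ((Ech_eq_one_iff d _).mp h8)
      have h10 : x * (i₁ - i₂) = 0 := by rw [← h9, hy]; ring
      have h11 : x * (i₁ - i₂) = 0 * (i₁ - i₂) := by rw [h10, zero_mul]
      exact hxne (hunit.mul_right_cancel h11)
    have hu : g x = 0 := by
      have h12 : (Ech d (-(x * i₁)) * Ech d (x * i₂) - Ech d (-(x * i₂)) * Ech d (x * i₁))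
          * g x = 0 := by
        linear_combination Ech d (x * i₂) * heq i₁ (Or.inl rfl) -
          Ech d (x * i₁) * heq i₂ (Or.inr rfl)
      exact (mul_eq_zero.mp h12).resolve_left hdet
    have hw : g (-x) = 0 := by
      have h13 := heq i₁ (Or.inl rfl)
      rw [hu, mul_zero, zero_add] at h13
      exact (mul_eq_zero.mp h13).resolve_left (Ech_ne_zero d _)
    have hj2 := (hfib s j).mp rfl
    rcases hj2 with hh | hh
    · rw [hh]; exact hu
    · rw [hh]; exact hw

lemma dot_single (d : ℕ) [NeZero d] (a : ZMod d → ℂ) (f : ZMod d → ℂ) (i : ZMod d) (n : ℕ) :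
    ∑ k : ZMod d, ((convMat d a) ^ n *ᵥ (Pi.single i 1 : ZMod d → ℂ)) k * f k
      = (d : ℂ)⁻¹ * ∑ j : ZMod d,
          hatKer d a j ^ n * (Ech d (-(j * i)) * ∑ k : ZMod d, f k * Ech d (j * k)) := by
  calc ∑ k : ZMod d, ((convMat d a) ^ n *ᵥ (Pi.single i 1 : ZMod d → ℂ)) k * f k
      = ∑ k : ZMod d, (d : ℂ)⁻¹ * ∑ j : ZMod d,
          (Ech d (-(j * i)) * hatKer d a j ^ n) * (chi d j k * f k) := by
        refine Finset.sum_congr rfl fun k _ => ?_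
        rw [pow_mulVec_single]
        simp only [Pi.smul_apply, Finset.sum_apply, smul_eq_mul]
        rw [mul_assoc, Finset.sum_mul]
        congr 1
        exact Finset.sum_congr rfl fun j _ => by ring
    _ = (d : ℂ)⁻¹ * ∑ j : ZMod d,
          (Ech d (-(j * i)) * hatKer d a j ^ n) * ∑ k : ZMod d, chi d j k * f k := by
        rw [← Finset.mul_sum]
        congr 1
        rw [Finset.sum_comm]
        exact Finset.sum_congr rfl fun j _ => (Finset.mul_sum _ _ _).symm
    _ = (d : ℂ)⁻¹ * ∑ j : ZMod d,
          hatKer d a j ^ n * (Ech d (-(j * i)) * ∑ k : ZMod d, f k * Ech d (j * k)) := by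
        congr 1
        refine Finset.sum_congr rfl fun j _ => ?_
        have : ∑ k : ZMod d, chi d j k * f k = ∑ k : ZMod d, f k * Ech d (j * k) :=
          Finset.sum_congr rfl fun k _ => mul_comm _ _
        rw [this]; ring

/-- for odd `d` and a kernel whose DFT is real, symmetric and strictly
decreasing on `{0, …, (d-1)/2}`, and `Ω = {i₁, i₂}` with `i₁ ≠ i₂`,
`Y = {A^n e_i : i ∈ Ω, n ≤ (d-1)/2}` is a frame iff `gcd(|i₁ - i₂|, d) = 1`. -/
theorem stmt3 (d : ℕ) [NeZero d] (hodd : Odd d) (a : ZMod d → ℂ)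
    (hsym : ∀ j : ZMod d, hatKer d a (-j) = hatKer d a j)
    (hreal : ∀ j : ZMod d, (hatKer d a j).im = 0)
    (hdec : ∀ s t : ℕ, s < t → t ≤ (d - 1) / 2 →
      (hatKer d a (t : ZMod d)).re < (hatKer d a (s : ZMod d)).re)
    (i₁ i₂ : ZMod d) (hne : i₁ ≠ i₂) :
    Submodule.span ℂ {v : ZMod d → ℂ | ∃ i : ZMod d, (i = i₁ ∨ i = i₂) ∧
        ∃ n ≤ (d - 1) / 2, v = (convMat d a) ^ n *ᵥ (Pi.single i 1 : ZMod d → ℂ)} = ⊤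
      ↔ Nat.gcd (i₁ - i₂).val d = 1 := by

  have hd0 : d ≠ 0 := NeZero.ne d
  have hdC : (d : ℂ) ≠ 0 := Nat.cast_ne_zero.mpr hd0
  set m := (d - 1) / 2 with hm
  have hd2 : d = 2 * m + 1 := by
    obtain ⟨t, ht⟩ := hodd; omega
  set S : Set (ZMod d → ℂ) := {v : ZMod d → ℂ | ∃ i : ZMod d, (i = i₁ ∨ i = i₂) ∧
      ∃ n ≤ m, v = (convMat d a) ^ n *ᵥ (Pi.single i 1 : ZMod d → ℂ)} with hS
  constructor
  · -- span = ⊤ → gcd = 1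
    intro hspan
    by_contra hgcd
    -- construct a nonzero annihilating vector
    set g0 := Nat.gcd (i₁ - i₂).val d with hg0
    have hvne : i₁ - i₂ ≠ 0 := sub_ne_zero.mpr hne
    have hval0 : (i₁ - i₂).val ≠ 0 := fun h => hvne ((ZMod.val_eq_zero _).mp h)
    have hg0d : g0 ∣ d := Nat.gcd_dvd_right _ _
    have hg0v : g0 ∣ (i₁ - i₂).val := Nat.gcd_dvd_left _ _
    have hg0pos : 0 < g0 := Nat.gcd_pos_of_pos_right _ (Nat.pos_of_ne_zero hd0)
    have hg0odd : Odd g0 := hodd.of_dvd_nat hg0d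
    have hg03 : 3 ≤ g0 := by
      rcases hg0odd with ⟨t, ht⟩
      omega
    set sN := d / g0 with hsN
    have hsNg : sN * g0 = d := Nat.div_mul_cancel hg0d
    have hsN1 : 1 ≤ sN := by
      rcases Nat.eq_zero_or_pos sN with h | h
      · rw [h, zero_mul] at hsNg; omega
      · exact h
    have hsNm : sN ≤ m := by nlinarith [hsNg, hg03, hd2, hsN1]
    have hsNd : sN < d := by nlinarith
    set x : ZMod d := ((sN : ℕ) : ZMod d) with hxdef
    have hxval : x.val = sN := ZMod.val_cast_of_lt hsNd
    have hxne : x ≠ 0 := by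
      intro h; rw [h, ZMod.val_zero] at hxval; omega
    have hxmul : x * (i₁ - i₂) = 0 := by
      have : x * (i₁ - i₂) = ((sN * (i₁ - i₂).val : ℕ) : ZMod d) := by
        push_cast [ZMod.natCast_zmod_val]; ring
      rw [this, ZMod.natCast_eq_zero_iff]
      obtain ⟨t, ht⟩ := hg0v
      exact ⟨t, by rw [ht, ← hsNg]; ring⟩
    have hxi : ∀ i : ZMod d, i = i₁ ∨ i = i₂ → x * (i - i₁) = 0 := by
      intro i hi
      rcases hi with h | h
      · rw [h, sub_self, mul_zero]
      · rw [h, show x * (i₂ - i₁) = -(x * (i₁ - i₂)) from by ring, hxmul, neg_zero]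
    set f : ZMod d → ℂ :=
      fun k => Ech d (-(x * i₁)) * Ech d (x * k) - Ech d (x * i₁) * Ech d (-(x * k)) with hf
    -- the "DFT" of f
    have hgf : ∀ j : ZMod d, ∑ k : ZMod d, f k * Ech d (j * k)
        = Ech d (-(x * i₁)) * (if j + x = 0 then (d : ℂ) else 0)
          - Ech d (x * i₁) * (if j - x = 0 then (d : ℂ) else 0) := by
      intro j
      have hterm : ∀ k : ZMod d, f k * Ech d (j * k)
          = Ech d (-(x * i₁)) * Ech d ((j + x) * k) - Ech d (x * i₁) * Ech d ((j - x) * k) := by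
        intro k
        rw [hf]
        have e1 : Ech d (x * k) * Ech d (j * k) = Ech d ((j + x) * k) := by
          rw [← AddChar.map_add_eq_mul]; congr 1; ring
        have e2 : Ech d (-(x * k)) * Ech d (j * k) = Ech d ((j - x) * k) := by
          rw [← AddChar.map_add_eq_mul]; congr 1; ring
        calc (Ech d (-(x * i₁)) * Ech d (x * k) - Ech d (x * i₁) * Ech d (-(x * k)))
              * Ech d (j * k)
            = Ech d (-(x * i₁)) * (Ech d (x * k) * Ech d (j * k))
              - Ech d (x * i₁) * (Ech d (-(x * k)) * Ech d (j * k)) := by ring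
          _ = _ := by rw [e1, e2]
      calc ∑ k : ZMod d, f k * Ech d (j * k)
          = ∑ k : ZMod d, (Ech d (-(x * i₁)) * Ech d ((j + x) * k)
              - Ech d (x * i₁) * Ech d ((j - x) * k)) :=
            Finset.sum_congr rfl fun k _ => hterm k
        _ = Ech d (-(x * i₁)) * (∑ k : ZMod d, Ech d ((j + x) * k))
            - Ech d (x * i₁) * (∑ k : ZMod d, Ech d ((j - x) * k)) := by
            rw [Finset.sum_sub_distrib, Finset.mul_sum, Finset.mul_sum]
        _ = _ := by rw [Ech_sum, Ech_sum]
    -- f annihilates S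
    have hperp : ∀ v ∈ S, ∑ k : ZMod d, v k * f k = 0 := by
      rintro v ⟨i, hi, n, hn, rfl⟩
      rw [dot_single]
      have hsum0 : ∑ j : ZMod d,
          hatKer d a j ^ n * (Ech d (-(j * i)) * ∑ k : ZMod d, f k * Ech d (j * k)) = 0 := by
        have hxx : (-x : ZMod d) ≠ x := by
          intro h
          exact hxne (zmod_odd_double d hodd x (by nth_rewrite 1 [← h]; rw [neg_add_cancel]))
        have hsummand : ∀ j : ZMod d,
            hatKer d a j ^ n * (Ech d (-(j * i)) * ∑ k : ZMod d, f k * Ech d (j * k))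
            = (if j = -x then
                hatKer d a j ^ n * (Ech d (-(j * i)) * (Ech d (-(x * i₁)) * d)) else 0)
              - (if j = x then
                hatKer d a j ^ n * (Ech d (-(j * i)) * (Ech d (x * i₁) * d)) else 0) := by
          intro j
          rw [hgf j]
          by_cases h1 : j = -x <;> by_cases h2 : j = x
          · exact absurd (h2 ▸ h1) hxx.symm
          · rw [if_pos h1, if_neg h2, if_pos (by rw [h1]; ring),
              if_neg (fun hh => h2 (sub_eq_zero.mp hh))]
            ring
          · rw [if_neg h1, if_pos h2, if_neg (fun hh => h1 (eq_neg_of_add_eq_zero_left hh)),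
              if_pos (by rw [h2]; ring)]
            ring
          · rw [if_neg h1, if_neg h2, if_neg (fun hh => h1 (eq_neg_of_add_eq_zero_left hh)),
              if_neg (fun hh => h2 (sub_eq_zero.mp hh))]
            ring
        have key1 : Ech d (-(-x * i)) * Ech d (-(x * i₁)) = 1 := by
          rw [← AddChar.map_add_eq_mul,
            show -(-x * i) + -(x * i₁) = x * (i - i₁) from by ring, hxi i hi,
            AddChar.map_zero_eq_one]
        have key2 : Ech d (-(x * i)) * Ech d (x * i₁) = 1 := by
          rw [← AddChar.map_add_eq_mul,
            show -(x * i) + x * i₁ = -(x * (i - i₁)) from by ring, hxi i hi, neg_zero,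
            AddChar.map_zero_eq_one]
        calc ∑ j : ZMod d,
            hatKer d a j ^ n * (Ech d (-(j * i)) * ∑ k : ZMod d, f k * Ech d (j * k))
            = ∑ j : ZMod d, ((if j = -x then
                hatKer d a j ^ n * (Ech d (-(j * i)) * (Ech d (-(x * i₁)) * d)) else 0)
              - (if j = x then
                hatKer d a j ^ n * (Ech d (-(j * i)) * (Ech d (x * i₁) * d)) else 0)) :=
              Finset.sum_congr rfl fun j _ => hsummand j
          _ = (∑ j : ZMod d, if j = -x then
                hatKer d a j ^ n * (Ech d (-(j * i)) * (Ech d (-(x * i₁)) * d)) else 0)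
              - (∑ j : ZMod d, if j = x then
                hatKer d a j ^ n * (Ech d (-(j * i)) * (Ech d (x * i₁) * d)) else 0) :=
              Finset.sum_sub_distrib _ _
          _ = hatKer d a (-x) ^ n * (Ech d (-(-x * i)) * (Ech d (-(x * i₁)) * d))
              - hatKer d a x ^ n * (Ech d (-(x * i)) * (Ech d (x * i₁) * d)) := by
              rw [Finset.sum_ite_eq' Finset.univ (-x), Finset.sum_ite_eq' Finset.univ x]
              simp
          _ = 0 := by
              rw [hsym x]
              linear_combination (hatKer d a x ^ n * (d : ℂ)) * key1
                - (hatKer d a x ^ n * (d : ℂ)) * key2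
      rw [hsum0, mul_zero]
    -- conclude f = 0 — contradiction
    have hf0 : f = 0 := (span_top_iff_dot d S).mp hspan f hperp
    have hval : ∑ k : ZMod d, f k * Ech d ((-x) * k) = (d : ℂ) * Ech d (-(x * i₁)) := by
      rw [hgf (-x)]
      have h1 : (-x) + x = 0 := by ring
      have h2 : (-x) - x ≠ 0 := by
        intro h
        apply hxne
        apply zmod_odd_double d hodd x
        have : x + x = -((-x) - x) := by ring
        rw [this, h, neg_zero]
      rw [if_pos h1, if_neg h2]
      ring
    rw [hf0] at hval
    simp only [Pi.zero_apply, zero_mul, Finset.sum_const_zero] at hval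
    exact (mul_ne_zero hdC (Ech_ne_zero d _)) hval.symm
  · -- gcd = 1 → span = ⊤
    intro hgcd
    rw [span_top_iff_dot]
    intro f hf
    apply eq_zero_of_dft_eq_zero
    have hunit : IsUnit (i₁ - i₂) := by
      rw [← ZMod.natCast_zmod_val (i₁ - i₂)]
      exact (ZMod.isUnit_iff_coprime _ _).mpr hgcd
    have hinj : ∀ s t : ℕ, s ≤ m → t ≤ m →
        hatKer d a (s : ZMod d) = hatKer d a (t : ZMod d) → s = t := by
      intro s t hs ht hst
      by_contra hstne
      rcases Nat.lt_or_ge s t with h | h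
      · have := hdec s t h ht
        rw [hst] at this
        exact lt_irrefl _ this
      · have h' : t < s := by omega
        have := hdec t s h' hs
        rw [hst] at this
        exact lt_irrefl _ this
    have hg := ghat_zero d m hodd hd2 (hatKer d a) hsym hinj i₁ i₂ hunit
      (fun j => ∑ k : ZMod d, f k * Ech d (j * k)) ?_
    · exact hg
    · intro n hn i hi
      have hv : (convMat d a) ^ n *ᵥ (Pi.single i 1 : ZMod d → ℂ) ∈ S :=
        ⟨i, hi, n, hn, rfl⟩
      have := hf _ hv
      rw [dot_single] at this
      rcases mul_eq_zero.mp this with h | h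
      · exact absurd h (inv_ne_zero hdC)
      · exact h
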